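/- Let N be a natural number and p, λ, β real numbers with 1 < p < N, λ > 0, β > 0. Let φ, g : ℝ → ℝ with φ continuously differentiable on [1,∞), φ(r) > 0 for all r ≥ 1, g continuous on [1,∞) with g(r) > 0 for all r ≥ 1, F satisfying the radial eigenvalue ODE on (1,∞), the Robin condition φ'(1) = β^(1/(p−1))·φ(1), and r_* > 1 with φ'(r_*) = 0. Then β·φ(1)^(p−1) = λ·∫_1^{r_*} s^(N−1)·g(s)·φ(s)^(p−1) ds. -/

import Mathlib

open Real Set MeasureTheory intervalIntegral

/-- The radial quantity `F(r) = r^(N-1) |φ'(r)|^(p-2) φ'(r)`, written with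
real exponents via the sign function. -/
noncomputable def radialF (N : ℕ) (p : ℝ) (φ : ℝ → ℝ) (r : ℝ) : ℝ :=
  r ^ ((N : ℝ) - 1) * Real.sign (deriv φ r) * |deriv φ r| ^ (p - 1)

lemma signpow_continuous (p : ℝ) (hp : 1 < p) :
    Continuous fun x : ℝ => Real.sign x * |x| ^ (p - 1) := by
  have hq : (0:ℝ) < p - 1 := by linarith
  rw [continuous_iff_continuousAt]
  intro x
  rcases lt_trichotomy x 0 with hx | hx | hx
  · have hev : (fun y : ℝ => Real.sign y * |y| ^ (p - 1)) =ᶠ[nhds x]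
        fun y => (-1 : ℝ) * |y| ^ (p - 1) := by
      filter_upwards [eventually_lt_nhds hx] with y hy
      rw [Real.sign_of_neg hy]
    exact ContinuousAt.congr
      (continuous_const.mul (continuous_abs.rpow_const fun _ => Or.inr hq.le)).continuousAt
      hev.symm
  · subst hx
    have h0 : Real.sign (0:ℝ) * |(0:ℝ)| ^ (p - 1) = 0 := by simp
    rw [ContinuousAt, h0]
    have habs : Filter.Tendsto (fun y : ℝ => |y| ^ (p - 1)) (nhds 0) (nhds 0) := by
      have := (continuous_abs.rpow_const fun _ : ℝ => Or.inr hq.le).continuousAt (x := (0:ℝ))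
      simpa [ContinuousAt, Real.zero_rpow hq.ne'] using this
    refine squeeze_zero_norm (fun y => ?_) habs
    have hs : |Real.sign y| ≤ 1 := by
      rcases lt_trichotomy y 0 with h | h | h <;>
        simp [Real.sign_of_neg, Real.sign_of_pos, h]
    have hnn : (0:ℝ) ≤ |y| ^ (p - 1) := Real.rpow_nonneg (abs_nonneg y) _
    calc ‖Real.sign y * |y| ^ (p - 1)‖ = |Real.sign y| * |(|y| ^ (p - 1))| := abs_mul _ _
      _ ≤ 1 * |y| ^ (p - 1) := by
          rw [abs_of_nonneg hnn]; exact mul_le_mul_of_nonneg_right hs hnn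
      _ = |y| ^ (p - 1) := one_mul _
  · have hev : (fun y : ℝ => Real.sign y * |y| ^ (p - 1)) =ᶠ[nhds x]
        fun y => (1 : ℝ) * |y| ^ (p - 1) := by
      filter_upwards [eventually_gt_nhds hx] with y hy
      rw [Real.sign_of_pos hy]
    exact ContinuousAt.congr
      (continuous_const.mul (continuous_abs.rpow_const fun _ => Or.inr hq.le)).continuousAt
      hev.symm

/-- The fundamental identity (3.3) relating the Robin parameter, the boundary
value and the weight: `β φ(1)^(p-1) = λ ∫_1^{r_*} s^(N-1) g(s) φ(s)^(p-1) ds`. -/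
theorem fundamental_identity (N : ℕ) (p lam β : ℝ)
    (hp : 1 < p) (hpN : p < N) (hlam : 0 < lam) (hβ : 0 < β)
    (φ g : ℝ → ℝ)
    (hφdiff : ∀ r ≥ (1 : ℝ), DifferentiableAt ℝ φ r)
    (hφC1 : ContinuousOn (deriv φ) (Set.Ici 1))
    (hφpos : ∀ r ≥ (1 : ℝ), 0 < φ r)
    (hgcont : ContinuousOn g (Set.Ici 1))
    (hgpos : ∀ r ≥ (1 : ℝ), 0 < g r)
    (hODE : ∀ r > (1 : ℝ),
      HasDerivAt (radialF N p φ) (-(lam * r ^ ((N : ℝ) - 1) * g r * φ r ^ (p - 1))) r)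
    (hRobin : deriv φ 1 = β ^ (1 / (p - 1)) * φ 1)
    (rstar : ℝ) (hrstar : 1 < rstar) (hcrit : deriv φ rstar = 0) :
    β * φ 1 ^ (p - 1) =
      lam * ∫ s in (1 : ℝ)..rstar, s ^ ((N : ℝ) - 1) * g s * φ s ^ (p - 1) := by
  have hq : (0:ℝ) < p - 1 := by linarith
  have hNn : (0:ℝ) ≤ (N:ℝ) - 1 := by
    have : (1:ℝ) < N := lt_trans hp hpN
    linarith
  -- continuity of φ on Ici 1
  have hφcont : ContinuousOn φ (Set.Ici 1) := fun r hr =>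
    (hφdiff r hr).continuousAt.continuousWithinAt
  -- continuity of F on [1, rstar]
  have hFcont : ContinuousOn (radialF N p φ) (Set.Icc 1 rstar) := by
    have h1 : ContinuousOn (fun r : ℝ => r ^ ((N:ℝ) - 1)) (Set.Icc 1 rstar) :=
      (continuous_id.rpow_const fun _ => Or.inr hNn).continuousOn
    have h2 : ContinuousOn (fun r => Real.sign (deriv φ r) * |deriv φ r| ^ (p - 1))
        (Set.Icc 1 rstar) :=
      (signpow_continuous p hp).comp_continuousOn
        (hφC1.mono (Set.Icc_subset_Ici_self))
    exact (h1.mul h2).congr fun x _ => by simp [radialF, mul_assoc]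
  -- integrability of the RHS derivative
  have hintg : ContinuousOn (fun s : ℝ => s ^ ((N:ℝ) - 1) * g s * φ s ^ (p - 1))
      (Set.Icc 1 rstar) := by
    refine ContinuousOn.mul (ContinuousOn.mul ?_ (hgcont.mono Set.Icc_subset_Ici_self)) ?_
    · exact (continuous_id.rpow_const fun _ => Or.inr hNn).continuousOn
    · exact (hφcont.mono Set.Icc_subset_Ici_self).rpow_const fun x _ => Or.inr hq.le
  have hint : IntervalIntegrable
      (fun s : ℝ => -(lam * s ^ ((N:ℝ) - 1) * g s * φ s ^ (p - 1))) volume 1 rstar := by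
    have hc : ContinuousOn (fun s : ℝ => -(lam * s ^ ((N:ℝ) - 1) * g s * φ s ^ (p - 1)))
        (Set.Icc 1 rstar) :=
      ((continuousOn_const (c := lam)).mul hintg).neg.congr fun x _ => by simp only [Pi.neg_apply, Pi.mul_apply]; ring
    exact hc.intervalIntegrable_of_Icc hrstar.le
  -- FTC
  have hftc := intervalIntegral.integral_eq_sub_of_hasDeriv_right_of_le hrstar.le hFcont
    (fun x hx => ((hODE x hx.1).hasDerivWithinAt)) hint
  -- compute F rstar = 0
  have hFr : radialF N p φ rstar = 0 := by simp [radialF, hcrit]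
  -- compute F 1 = β * φ 1 ^ (p-1)
  have hd1pos : 0 < deriv φ 1 := by
    rw [hRobin]
    exact mul_pos (Real.rpow_pos_of_pos hβ _) (hφpos 1 le_rfl)
  have hF1 : radialF N p φ 1 = β * φ 1 ^ (p - 1) := by
    rw [radialF, Real.one_rpow, Real.sign_of_pos hd1pos, abs_of_pos hd1pos, hRobin,
      Real.mul_rpow (Real.rpow_pos_of_pos hβ _).le (hφpos 1 le_rfl).le,
      ← Real.rpow_mul hβ.le]
    rw [one_div, inv_mul_cancel₀ hq.ne', Real.rpow_one, one_mul, one_mul]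
  rw [hFr, hF1] at hftc
  have hI : (∫ s in (1:ℝ)..rstar, -(lam * s ^ ((N:ℝ) - 1) * g s * φ s ^ (p - 1)))
      = -(lam * ∫ s in (1:ℝ)..rstar, s ^ ((N:ℝ) - 1) * g s * φ s ^ (p - 1)) := by
    rw [intervalIntegral.integral_neg]
    congr 1
    rw [← intervalIntegral.integral_const_mul]
    simp [mul_assoc]
  rw [hI] at hftc
  linarith
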